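/- (Theorem 1: equivalence of the original and relaxed scheduling problems.) Let T ≥ 1, and for t = 0,…,T−1 let A_t ∈ ℝ^{n×n}, Q_t ∈ ℝ^{n×n} symmetric positive definite, let Q_T ∈ ℝ^{n×n} be symmetric positive definite, let W̄_{t−1} ∈ ℝ^{n×n} be symmetric positive semidefinite, and for each actuator i ∈ {1,…,N} let V_t(i) ∈ ℝ^{n×n} be symmetric positive semidefinite. Consider the objective J({K_{t|t+1}}) := ∑_{t=0}^{T−1} tr(K_{t|t+1} W̄_{t−1}). Problem A (original): minimize J over schedules σ : {0,…,T−1} → {1,…,N} and trajectories defined by P_T = Q_T⁻¹, P_{t|t+1} = P_{t+1} + V_t(σ(t)), K_{t|t+1} = P_{t|t+1}⁻¹, P_t = (A_tᵀ K_{t|t+1} A_t + Q_t)⁻¹. Problem B (relaxed): minimize J over tuples {K_{t|t+1}, P_{t|t+1}, P_t, V_t}_{t=0}^{T−1} with V_t ∈ {V_t(1),…,V_t(N)}, P_T = Q_T⁻¹, P_{t|t+1} = P_{t+1} + V_t, the block matrix [K_{t|t+1}, I; I, P_{t|t+1}] positive semidefinite, and the block matrix [Q_t⁻¹ − P_t,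 Q_t⁻¹A_tᵀ; A_t Q_t⁻¹, P_{t|t+1} + A_t Q_t⁻¹ A_tᵀ] positive semidefinite, for all t. Then the minimum value of Problem A equals the minimum value of Problem B; in particular every optimal solution of the relaxed Problem B attains the optimal value of the original Problem A and vice versa. -/

import Mathlib

open Matrix Finset

/-! ### Auxiliary lemmas -/

private lemma psd_trace_nonneg {n : ℕ} {X : Matrix (Fin n) (Fin n) ℝ} (h : X.PosSemidef) :
    0 ≤ X.trace := by
  rw [Matrix.trace]
  refine Finset.sum_nonneg fun i _ => ?_
  have := h.dotProduct_mulVec_nonneg (Pi.single i 1)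
  simpa [Matrix.mulVec_single, dotProduct, Pi.single_apply, Finset.sum_ite_eq] using this

private lemma psd_trace_mul_nonneg {n : ℕ} {X W : Matrix (Fin n) (Fin n) ℝ}
    (hX : X.PosSemidef) (hW : W.PosSemidef) : 0 ≤ (X * W).trace := by
  obtain ⟨B, rfl⟩ : ∃ B : Matrix (Fin n) (Fin n) ℝ, X = Bᴴ * B := by
    open scoped MatrixOrder Matrix.Norms.L2Operator in
    exact CStarAlgebra.nonneg_iff_eq_star_mul_self.mp hX.nonneg
  rw [Matrix.trace_mul_cycle, Matrix.trace_mul_cycle]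
  exact psd_trace_nonneg (hW.mul_mul_conjTranspose_same B)

private lemma trace_mul_mono {n : ℕ} {X Y W : Matrix (Fin n) (Fin n) ℝ}
    (h : (Y - X).PosSemidef) (hW : W.PosSemidef) : (X * W).trace ≤ (Y * W).trace := by
  have := psd_trace_mul_nonneg h hW
  rw [Matrix.sub_mul, Matrix.trace_sub] at this
  linarith

private lemma conj_psd {n : ℕ} {X : Matrix (Fin n) (Fin n) ℝ} (hX : X.PosSemidef)
    (A : Matrix (Fin n) (Fin n) ℝ) : (Aᵀ * X * A).PosSemidef := by
  simpa [Matrix.conjTranspose_eq_transpose_of_trivial] using hX.conjTranspose_mul_mul_same A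

private lemma fromBlocks_one_psd_iff {n : ℕ} {K M : Matrix (Fin n) (Fin n) ℝ} (hM : M.PosDef) :
    (fromBlocks K 1 1 M).PosSemidef ↔ (K - M⁻¹).PosSemidef := by
  haveI := hM.isUnit.invertible
  have h : (fromBlocks K 1 1 M) = fromBlocks K 1 (1 : Matrix (Fin n) (Fin n) ℝ)ᴴ M := by
    rw [conjTranspose_one]
  rw [h, PosDef.fromBlocks₂₂ _ _ hM]
  simp

private lemma psd_of_fromBlocks₁₁' {n : ℕ} {K B C D : Matrix (Fin n) (Fin n) ℝ}
    (h : (fromBlocks K B C D).PosSemidef) : K.PosSemidef := by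
  have := h.submatrix (Sum.inl : Fin n → Fin n ⊕ Fin n)
  convert this using 1
  ext i j; rfl

private lemma psd_of_fromBlocks₂₂' {n : ℕ} {K B C D : Matrix (Fin n) (Fin n) ℝ}
    (h : (fromBlocks K B C D).PosSemidef) : D.PosSemidef := by
  have := h.submatrix (Sum.inr : Fin n → Fin n ⊕ Fin n)
  convert this using 1
  ext i j; rfl

private lemma posDef_of_fromBlocks_one {n : ℕ} {K M : Matrix (Fin n) (Fin n) ℝ}
    (h : (fromBlocks K 1 1 M).PosSemidef) : M.PosDef := by
  have hMpsd : M.PosSemidef := psd_of_fromBlocks₂₂' h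
  have hKpsd : K.PosSemidef := psd_of_fromBlocks₁₁' h
  refine PosDef.of_dotProduct_mulVec_pos hMpsd.1 fun v hv => ?_
  have hs : (0 : ℝ) < v ⬝ᵥ v := by
    have := Matrix.dotProduct_self_star_pos_iff (v := v)
    simp only [star_trivial] at this
    exact this.mpr hv
  set s : ℝ := v ⬝ᵥ v with hs_def
  set c : ℝ := v ⬝ᵥ K *ᵥ v with hc_def
  set m : ℝ := v ⬝ᵥ M *ᵥ v with hm_def
  have hc : 0 ≤ c := by simpa [star_trivial] using hKpsd.dotProduct_mulVec_nonneg v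
  have hm0 : 0 ≤ m := by simpa [star_trivial] using hMpsd.dotProduct_mulVec_nonneg v
  have key : ∀ t : ℝ, 0 ≤ t * t * c - 2 * t * s + m := by
    intro t
    have h2 := h.dotProduct_mulVec_nonneg (Sum.elim (-(t • v)) v)
    rw [fromBlocks_mulVec] at h2
    simp only [star_trivial, Sum.elim_comp_inl, Sum.elim_comp_inr, one_mulVec,
      sumElim_dotProduct_sumElim, dotProduct_add, add_dotProduct, neg_dotProduct,
      dotProduct_neg, smul_dotProduct, dotProduct_smul, mulVec_neg, mulVec_smul,
      smul_eq_mul, neg_mul, mul_neg, neg_neg] at h2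
    show 0 ≤ t * t * (v ⬝ᵥ K *ᵥ v) - 2 * t * (v ⬝ᵥ v) + v ⬝ᵥ M *ᵥ v
    nlinarith [h2]
  show 0 < v ⬝ᵥ M *ᵥ v
  rcases hc.eq_or_lt with hceq | hcpos
  · have := key 1
    simp only [← hceq] at this
    nlinarith
  · have hkey := key (s / c)
    have e : s / c * (s / c) * c = s * s / c := by field_simp
    have e2 : 2 * (s / c) * s = 2 * (s * s / c) := by ring
    rw [e, e2] at hkey
    nlinarith [div_pos (mul_pos hs hs) hcpos]

private lemma inv_antitone {n : ℕ} {A B : Matrix (Fin n) (Fin n) ℝ}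
    (hA : A.PosDef) (hB : B.PosDef) (h : (B - A).PosSemidef) :
    (A⁻¹ - B⁻¹).PosSemidef := by
  have hAinv : (A⁻¹).PosDef := hA.inv
  haveI := hAinv.isUnit.invertible
  haveI := hB.isUnit.invertible
  have hAA : A⁻¹⁻¹ = A := Matrix.nonsing_inv_nonsing_inv _ (isUnit_iff_ne_zero.mpr hA.det_pos.ne')
  have key : (fromBlocks B 1 (1 : Matrix (Fin n) (Fin n) ℝ)ᴴ A⁻¹).PosSemidef := by
    rw [PosDef.fromBlocks₂₂ _ _ hAinv]
    simpa [hAA] using h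
  have := (PosDef.fromBlocks₁₁ _ _ hB).mp key
  simpa using this

private lemma woodbury {n : ℕ} {Q M : Matrix (Fin n) (Fin n) ℝ} (A : Matrix (Fin n) (Fin n) ℝ)
    (hQ : Q.PosDef) (hM : M.PosDef) :
    (Aᵀ * M⁻¹ * A + Q)⁻¹
      = Q⁻¹ - Q⁻¹ * Aᵀ * (M + A * Q⁻¹ * Aᵀ)⁻¹ * (A * Q⁻¹) := by
  have hMM : M⁻¹⁻¹ = M := Matrix.nonsing_inv_nonsing_inv _ (isUnit_iff_ne_zero.mpr hM.det_pos.ne')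
  have hAQA : (A * Q⁻¹ * Aᵀ).PosSemidef := by
    simpa [Matrix.conjTranspose_eq_transpose_of_trivial] using
      hQ.inv.posSemidef.mul_mul_conjTranspose_same A
  have hAC : IsUnit (M⁻¹⁻¹ + A * Q⁻¹ * Aᵀ) := by
    rw [hMM]; exact (hM.add_posSemidef hAQA).isUnit
  have := Matrix.add_mul_mul_inv_eq_sub Q Aᵀ M⁻¹ A hQ.isUnit hM.inv.isUnit hAC
  rw [add_comm (Aᵀ * M⁻¹ * A) Q, this, hMM]
  noncomm_ring

private lemma lmi2_iff {n : ℕ} {Q M P : Matrix (Fin n) (Fin n) ℝ} (A : Matrix (Fin n) (Fin n) ℝ)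
    (hQ : Q.PosDef) (hM : M.PosDef) :
    (fromBlocks (Q⁻¹ - P) (Q⁻¹ * Aᵀ) (A * Q⁻¹) (M + A * Q⁻¹ * Aᵀ)).PosSemidef
      ↔ ((Aᵀ * M⁻¹ * A + Q)⁻¹ - P).PosSemidef := by
  have hAQA : (A * Q⁻¹ * Aᵀ).PosSemidef := by
    simpa [Matrix.conjTranspose_eq_transpose_of_trivial] using
      hQ.inv.posSemidef.mul_mul_conjTranspose_same A
  have hD : (M + A * Q⁻¹ * Aᵀ).PosDef := hM.add_posSemidef hAQA
  haveI := hD.isUnit.invertible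
  have hC : A * Q⁻¹ = (Q⁻¹ * Aᵀ)ᴴ := by
    have hQinv : (Q⁻¹)ᵀ = Q⁻¹ := by
      have := hQ.inv.isHermitian
      rwa [Matrix.IsHermitian, Matrix.conjTranspose_eq_transpose_of_trivial] at this
    simp [Matrix.conjTranspose_eq_transpose_of_trivial, Matrix.transpose_mul,
      Matrix.transpose_transpose, hQinv]
  nth_rewrite 1 [hC]
  rw [PosDef.fromBlocks₂₂ _ _ hD]
  have e : Q⁻¹ - P - Q⁻¹ * Aᵀ * (M + A * Q⁻¹ * Aᵀ)⁻¹ * (Q⁻¹ * Aᵀ)ᴴ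
      = (Aᵀ * M⁻¹ * A + Q)⁻¹ - P := by
    rw [← hC, woodbury A hQ hM]
    noncomm_ring
  rw [e]

/-- The exact backward Riccati recursion, indexed by the number of steps from the
terminal time `T`:  `ric T A Q Vs k` is the value of `P` at time `T - k`. -/
private noncomputable def ric {n : ℕ} (T : ℕ) (A Q Vs : ℕ → Matrix (Fin n) (Fin n) ℝ) :
    ℕ → Matrix (Fin n) (Fin n) ℝ
  | 0 => (Q T)⁻¹
  | (k + 1) =>
      ((A (T - (k+1)))ᵀ * (ric T A Q Vs k + Vs (T - (k+1)))⁻¹ * (A (T - (k+1)))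
        + Q (T - (k+1)))⁻¹

/-- Theorem 1: the optimal value of the original actuator-scheduling
problem (Problem A) equals the optimal value of its LMI relaxation (Problem B).
Here `W t` denotes the weight matrix `W̄_{t−1}`, and `V t i` the actuator matrices. -/
theorem relaxed_problem_equiv_original {n N : ℕ} (T : ℕ) (hT : 1 ≤ T) (hN : 1 ≤ N)
    (A Q W : ℕ → Matrix (Fin n) (Fin n) ℝ)
    (V : ℕ → Fin N → Matrix (Fin n) (Fin n) ℝ)
    (hQ : ∀ t ≤ T, (Q t).PosDef)
    (hW : ∀ t < T, (W t).PosSemidef)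
    (hV : ∀ t < T, ∀ i, (V t i).PosSemidef) :
    -- Problem A: minimize over schedules `σ` with the exact Riccati recursion
    sInf {J : ℝ | ∃ (σ : ℕ → Fin N) (P Pmid Kmid : ℕ → Matrix (Fin n) (Fin n) ℝ),
        P T = (Q T)⁻¹ ∧
        (∀ t < T, Pmid t = P (t + 1) + V t (σ t)) ∧
        (∀ t < T, Kmid t = (Pmid t)⁻¹) ∧
        (∀ t < T, P t = ((A t)ᵀ * Kmid t * A t + Q t)⁻¹) ∧
        J = ∑ t ∈ range T, (Kmid t * W t).trace} =
    -- Problem B: minimize over tuples satisfying the LMI relaxation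
    sInf {J : ℝ | ∃ (Vsel P Pmid Kmid : ℕ → Matrix (Fin n) (Fin n) ℝ),
        P T = (Q T)⁻¹ ∧
        (∀ t < T, ∃ i : Fin N, Vsel t = V t i) ∧
        (∀ t < T, Pmid t = P (t + 1) + Vsel t) ∧
        (∀ t < T, (fromBlocks (Kmid t) 1 1 (Pmid t)).PosSemidef) ∧
        (∀ t < T, (fromBlocks ((Q t)⁻¹ - P t) ((Q t)⁻¹ * (A t)ᵀ)
            (A t * (Q t)⁻¹) (Pmid t + A t * (Q t)⁻¹ * (A t)ᵀ)).PosSemidef) ∧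
        J = ∑ t ∈ range T, (Kmid t * W t).trace} := by
  classical
  set SA := {J : ℝ | ∃ (σ : ℕ → Fin N) (P Pmid Kmid : ℕ → Matrix (Fin n) (Fin n) ℝ),
        P T = (Q T)⁻¹ ∧
        (∀ t < T, Pmid t = P (t + 1) + V t (σ t)) ∧
        (∀ t < T, Kmid t = (Pmid t)⁻¹) ∧
        (∀ t < T, P t = ((A t)ᵀ * Kmid t * A t + Q t)⁻¹) ∧
        J = ∑ t ∈ range T, (Kmid t * W t).trace} with hSA
  set SB := {J : ℝ | ∃ (Vsel P Pmid Kmid : ℕ → Matrix (Fin n) (Fin n) ℝ),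
        P T = (Q T)⁻¹ ∧
        (∀ t < T, ∃ i : Fin N, Vsel t = V t i) ∧
        (∀ t < T, Pmid t = P (t + 1) + Vsel t) ∧
        (∀ t < T, (fromBlocks (Kmid t) 1 1 (Pmid t)).PosSemidef) ∧
        (∀ t < T, (fromBlocks ((Q t)⁻¹ - P t) ((Q t)⁻¹ * (A t)ᵀ)
            (A t * (Q t)⁻¹) (Pmid t + A t * (Q t)⁻¹ * (A t)ᵀ)).PosSemidef) ∧
        J = ∑ t ∈ range T, (Kmid t * W t).trace} with hSB
  have hQT : (Q T).PosDef := hQ T le_rfl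
  -- positive definiteness along any exact (Problem A) trajectory
  have keyA : ∀ (Vs P Pmid Kmid : ℕ → Matrix (Fin n) (Fin n) ℝ),
      (∀ t < T, (Vs t).PosSemidef) →
      P T = (Q T)⁻¹ →
      (∀ t < T, Pmid t = P (t + 1) + Vs t) →
      (∀ t < T, Kmid t = (Pmid t)⁻¹) →
      (∀ t < T, P t = ((A t)ᵀ * Kmid t * A t + Q t)⁻¹) →
      ∀ t ≤ T, (P t).PosDef := by
    intro Vs P Pmid Kmid hVs h1 h2 h3 h4
    have main : ∀ k, k ≤ T → (P (T - k)).PosDef := by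
      intro k
      induction k with
      | zero => intro _; rw [Nat.sub_zero, h1]; exact hQT.inv
      | succ k ih =>
        intro hk
        have hk' : k ≤ T := Nat.le_of_succ_le hk
        have ht : T - (k+1) < T := by omega
        have ht1 : T - (k+1) + 1 = T - k := by omega
        have hP1 : (P (T - (k+1) + 1)).PosDef := by rw [ht1]; exact ih hk'
        have hPm : (Pmid (T - (k+1))).PosDef := by
          rw [h2 _ ht]; exact hP1.add_posSemidef (hVs _ ht)
        have hK : (Kmid (T - (k+1))).PosDef := by rw [h3 _ ht]; exact hPm.inv
        have hsum : ((A (T - (k+1)))ᵀ * Kmid (T - (k+1)) * A (T - (k+1))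
            + Q (T - (k+1))).PosDef :=
          Matrix.PosDef.posSemidef_add (conj_psd hK.posSemidef _) (hQ _ ht.le)
        rw [h4 _ ht]; exact hsum.inv
    intro t htle
    have := main (T - t) (by omega)
    rwa [Nat.sub_sub_self htle] at this
  -- the two LMI constraints hold along any exact trajectory
  have keyA2 : ∀ (Vs P Pmid Kmid : ℕ → Matrix (Fin n) (Fin n) ℝ),
      (∀ t < T, (Vs t).PosSemidef) →
      P T = (Q T)⁻¹ →
      (∀ t < T, Pmid t = P (t + 1) + Vs t) →
      (∀ t < T, Kmid t = (Pmid t)⁻¹) →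
      (∀ t < T, P t = ((A t)ᵀ * Kmid t * A t + Q t)⁻¹) →
      ∀ t < T, (fromBlocks (Kmid t) 1 1 (Pmid t)).PosSemidef ∧
        (fromBlocks ((Q t)⁻¹ - P t) ((Q t)⁻¹ * (A t)ᵀ)
            (A t * (Q t)⁻¹) (Pmid t + A t * (Q t)⁻¹ * (A t)ᵀ)).PosSemidef := by
    intro Vs P Pmid Kmid hVs h1 h2 h3 h4 t ht
    have hP1 : (P (t+1)).PosDef := keyA Vs P Pmid Kmid hVs h1 h2 h3 h4 (t+1) (by omega)
    have hPm : (Pmid t).PosDef := by rw [h2 _ ht]; exact hP1.add_posSemidef (hVs _ ht)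
    constructor
    · rw [fromBlocks_one_psd_iff hPm, h3 _ ht, sub_self]
      exact Matrix.PosSemidef.zero
    · rw [lmi2_iff (A t) (hQ t ht.le) hPm]
      rw [h4 _ ht, h3 _ ht, sub_self]
      exact Matrix.PosSemidef.zero
  -- Problem A feasible set maps into Problem B feasible set
  have hsub : SA ⊆ SB := by
    rintro J ⟨σ, P, Pmid, Kmid, h1, h2, h3, h4, h5⟩
    have hVs : ∀ t < T, ((fun s => V s (σ s)) t).PosSemidef := fun t ht => hV t ht (σ t)
    refine ⟨(fun s => V s (σ s)), P, Pmid, Kmid, h1, fun t ht => ⟨σ t, rfl⟩, h2,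
      fun t ht => (keyA2 _ P Pmid Kmid hVs h1 h2 h3 h4 t ht).1,
      fun t ht => (keyA2 _ P Pmid Kmid hVs h1 h2 h3 h4 t ht).2, h5⟩
  -- the exact trajectory generated by `ric` for a given selection `Vs`
  have hric : ∀ (Vs : ℕ → Matrix (Fin n) (Fin n) ℝ),
      (fun t => ric T A Q Vs (T - t)) T = (Q T)⁻¹ ∧
      (∀ t < T, (fun t => ric T A Q Vs (T - t)) t
        = ((A t)ᵀ * ((fun s => ((fun u => ric T A Q Vs (T - u)) (s + 1) + Vs s)⁻¹) t)
            * A t + Q t)⁻¹) := by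
    intro Vs
    constructor
    · show ric T A Q Vs (T - T) = (Q T)⁻¹
      rw [Nat.sub_self]; rfl
    · intro t ht
      show ric T A Q Vs (T - t) = _
      have hk : T - t = (T - (t+1)) + 1 := by omega
      rw [hk]
      show ((A (T - (T - (t+1) + 1)))ᵀ
          * (ric T A Q Vs (T - (t+1)) + Vs (T - (T - (t+1) + 1)))⁻¹
          * (A (T - (T - (t+1) + 1))) + Q (T - (T - (t+1) + 1)))⁻¹ = _
      have h5 : T - (T - (t+1) + 1) = t := by omega
      rw [h5]
  -- every element of SB is at least 0
  have hBdd : ∀ J ∈ SB, (0:ℝ) ≤ J := by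
    rintro J ⟨Vsel, P, Pmid, Kmid, h1, h2, h3, h4, h5, h6⟩
    rw [h6]
    refine Finset.sum_nonneg fun t htm => ?_
    have ht : t < T := Finset.mem_range.mp htm
    exact psd_trace_mul_nonneg (psd_of_fromBlocks₁₁' (h4 t ht)) (hW t ht)
  have hbddB : BddBelow SB := ⟨0, fun J hJ => hBdd J hJ⟩
  have hbddA : BddBelow SA := ⟨0, fun J hJ => hBdd J (hsub hJ)⟩
  -- SA is nonempty
  have hSAne : SA.Nonempty := by
    set σ0 : ℕ → Fin N := fun _ => ⟨0, hN⟩ with hσ0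
    set Vs : ℕ → Matrix (Fin n) (Fin n) ℝ := fun s => V s (σ0 s) with hVs
    obtain ⟨hA1, hA2⟩ := hric Vs
    refine ⟨∑ t ∈ range T, (((fun s => ((fun u => ric T A Q Vs (T - u)) (s + 1) + Vs s)⁻¹) t
        * W t).trace), σ0, (fun u => ric T A Q Vs (T - u)),
      (fun s => (fun u => ric T A Q Vs (T - u)) (s + 1) + Vs s),
      (fun s => ((fun u => ric T A Q Vs (T - u)) (s + 1) + Vs s)⁻¹),
      hA1, fun t ht => rfl, fun t ht => rfl, fun t ht => hA2 t ht, rfl⟩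
  have hSBne : SB.Nonempty := hSAne.mono hsub
  -- conclude by antisymmetry
  apply le_antisymm
  · -- sInf SA ≤ sInf SB : relaxation is exact
    refine le_csInf hSBne ?_
    rintro J ⟨Vsel, P, Pmid, Kmid, h1, h2, h3, h4, h5, h6⟩
    choose σp hσp using h2
    set σ : ℕ → Fin N := fun t => if h : t < T then σp t h else ⟨0, hN⟩ with hσ
    set Vs : ℕ → Matrix (Fin n) (Fin n) ℝ := fun s => V s (σ s) with hVsdef
    have hVsel : ∀ t < T, Vs t = Vsel t := by
      intro t ht
      simp only [hVsdef, hσ, dif_pos ht]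
      exact (hσp t ht).symm
    have hVs : ∀ t < T, (Vs t).PosSemidef := fun t ht => hV t ht _
    -- the exact trajectory
    set P' : ℕ → Matrix (Fin n) (Fin n) ℝ := fun u => ric T A Q Vs (T - u) with hP'
    set Pmid' : ℕ → Matrix (Fin n) (Fin n) ℝ := fun s => P' (s + 1) + Vs s with hPmid'
    set Kmid' : ℕ → Matrix (Fin n) (Fin n) ℝ := fun s => (Pmid' s)⁻¹ with hKmid'
    obtain ⟨hA1, hA2⟩ := hric Vs
    have hA2' : ∀ t < T, P' t = ((A t)ᵀ * Kmid' t * A t + Q t)⁻¹ := hA2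
    have hP'pd : ∀ t ≤ T, (P' t).PosDef :=
      keyA Vs P' Pmid' Kmid' hVs hA1 (fun t _ => rfl) (fun t _ => rfl) hA2'
    -- comparison: the exact trajectory dominates the relaxed one
    have comp : ∀ k, k ≤ T → (P' (T - k) - P (T - k)).PosSemidef := by
      intro k
      induction k with
      | zero =>
        intro _
        have hA1' : P' T = (Q T)⁻¹ := hA1
        rw [Nat.sub_zero, hA1', h1, sub_self]
        exact Matrix.PosSemidef.zero
      | succ k ih =>
        intro hk
        have hk' : k ≤ T := Nat.le_of_succ_le hk
        have ht : T - (k+1) < T := by omega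
        set t := T - (k+1) with htdef
        have ht1 : t + 1 = T - k := by omega
        have hdiff : (P' (t+1) - P (t+1)).PosSemidef := by rw [ht1]; exact ih hk'
        have hPm : (Pmid t).PosDef := posDef_of_fromBlocks_one (h4 t ht)
        have hP1 : (P' (t+1)).PosDef := hP'pd (t+1) (by omega)
        have hPm' : (Pmid' t).PosDef := hP1.add_posSemidef (hVs t ht)
        have hmid : (Pmid' t - Pmid t).PosSemidef := by
          have e : Pmid' t - Pmid t = P' (t+1) - P (t+1) := by
            rw [show Pmid' t = P' (t+1) + Vs t from rfl, hVsel t ht, h3 t ht]; abel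
          rw [e]; exact hdiff
        have hinv : ((Pmid t)⁻¹ - (Pmid' t)⁻¹).PosSemidef := inv_antitone hPm hPm' hmid
        have hQt : (Q t).PosDef := hQ t ht.le
        have hbig : ((A t)ᵀ * (Pmid' t)⁻¹ * A t + Q t).PosDef :=
          Matrix.PosDef.posSemidef_add (conj_psd hPm'.inv.posSemidef _) hQt
        have hbig2 : ((A t)ᵀ * (Pmid t)⁻¹ * A t + Q t).PosDef :=
          Matrix.PosDef.posSemidef_add (conj_psd hPm.inv.posSemidef _) hQt
        have hbigdiff : (((A t)ᵀ * (Pmid t)⁻¹ * A t + Q t)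
            - ((A t)ᵀ * (Pmid' t)⁻¹ * A t + Q t)).PosSemidef := by
          have e : ((A t)ᵀ * (Pmid t)⁻¹ * A t + Q t) - ((A t)ᵀ * (Pmid' t)⁻¹ * A t + Q t)
              = (A t)ᵀ * ((Pmid t)⁻¹ - (Pmid' t)⁻¹) * A t := by noncomm_ring
          rw [e]; exact conj_psd hinv _
        have hstep : (P' t - ((A t)ᵀ * (Pmid t)⁻¹ * A t + Q t)⁻¹).PosSemidef := by
          have := inv_antitone hbig hbig2 hbigdiff
          rwa [← hA2' t ht] at this
        have hRP : (((A t)ᵀ * (Pmid t)⁻¹ * A t + Q t)⁻¹ - P t).PosSemidef :=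
          (lmi2_iff (A t) hQt hPm).mp (h5 t ht)
        have : (P' t - P t).PosSemidef := by
          have e : P' t - P t = (P' t - ((A t)ᵀ * (Pmid t)⁻¹ * A t + Q t)⁻¹)
              + (((A t)ᵀ * (Pmid t)⁻¹ * A t + Q t)⁻¹ - P t) := by abel
          rw [e]; exact hstep.add hRP
        exact this
    -- termwise trace comparison
    have hterm : ∀ t < T, (Kmid' t * W t).trace ≤ (Kmid t * W t).trace := by
      intro t ht
      have hPm : (Pmid t).PosDef := posDef_of_fromBlocks_one (h4 t ht)
      have hP1 : (P' (t+1)).PosDef := hP'pd (t+1) (by omega)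
      have hPm' : (Pmid' t).PosDef := hP1.add_posSemidef (hVs t ht)
      have hmid : (Pmid' t - Pmid t).PosSemidef := by
        have hc := comp (T - (t+1)) (by omega)
        rw [Nat.sub_sub_self (by omega : t + 1 ≤ T)] at hc
        have e : Pmid' t - Pmid t = P' (t+1) - P (t+1) := by
          rw [show Pmid' t = P' (t+1) + Vs t from rfl, hVsel t ht, h3 t ht]; abel
        rw [e]; exact hc
      have hinv : ((Pmid t)⁻¹ - (Pmid' t)⁻¹).PosSemidef := inv_antitone hPm hPm' hmid
      have hKge : (Kmid t - (Pmid t)⁻¹).PosSemidef := (fromBlocks_one_psd_iff hPm).mp (h4 t ht)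
      have hfinal : (Kmid t - Kmid' t).PosSemidef := by
        have e : Kmid t - Kmid' t = (Kmid t - (Pmid t)⁻¹) + ((Pmid t)⁻¹ - (Pmid' t)⁻¹) := by
          rw [show Kmid' t = (Pmid' t)⁻¹ from rfl]; abel
        rw [e]; exact hKge.add hinv
      exact trace_mul_mono hfinal (hW t ht)
    -- assemble
    have hmemA : (∑ t ∈ range T, (Kmid' t * W t).trace) ∈ SA :=
      ⟨σ, P', Pmid', Kmid', hA1, fun t _ => rfl, fun t _ => rfl, hA2', rfl⟩
    calc sInf SA ≤ ∑ t ∈ range T, (Kmid' t * W t).trace := csInf_le hbddA hmemA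
      _ ≤ ∑ t ∈ range T, (Kmid t * W t).trace :=
          Finset.sum_le_sum fun t htm => hterm t (Finset.mem_range.mp htm)
      _ = J := h6.symm
  · -- sInf SB ≤ sInf SA
    exact csInf_le_csInf hbddB hSAne hsub
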